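/- arXiv:1611.06724 — 3 statements merged into one kernel-verified Lean document; each statement's English description precedes it below -/
import Mathlib

section
/- Let a, b be positive vectors in ℝ^q with a_k = b_k + n_k for nonnegative integers n_k, k = 1,…,q. Then the entire function φ(z) = qFq(a; b; z) = Σ_{m≥0} (a)_m/((b)_m m!) z^m is a polynomial multiple of e^z: precisely, φ(z) = e^z · P(z) for some polynomial P with real coefficients, and all zeros of φ are real and negative. -/
open Finset

section Aux
open Polynomial

noncomputable def Tb (β : ℝ) (p : ℝ[X]) : ℝ[X] :=
  Polynomial.X * (Polynomial.derivative p + p) + Polynomial.C β * p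

noncomputable def QL : List ℝ → ℝ[X]
  | [] => 1
  | β :: L => Tb β (QL L)

noncomputable def uu (p : ℝ[X]) (m : ℕ) : ℝ :=
  ∑ j ∈ Finset.range (m + 1), p.coeff j / (m - j).factorial

lemma uu_one (m : ℕ) : uu 1 m = 1 / m.factorial := by
  rw [uu, Finset.sum_eq_single 0]
  · simp
  · intro j hj hj0
    simp [Polynomial.coeff_one, hj0]
  · simp

lemma uu_Tb (β : ℝ) (p : ℝ[X]) (m : ℕ) :
    uu (Tb β p) m = ((m : ℝ) + β) * uu p m := by
  have hcoeff : ∀ j, (Tb β p).coeff j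
      = (Polynomial.X * (Polynomial.derivative p + p)).coeff j + β * p.coeff j := by
    intro j; simp [Tb, Polynomial.coeff_C_mul]
  have hsplit : uu (Tb β p) m =
      (∑ j ∈ Finset.range (m + 1),
        (Polynomial.X * (Polynomial.derivative p + p)).coeff j / ((m - j).factorial : ℝ))
      + β * uu p m := by
    rw [uu, uu, Finset.mul_sum, ← Finset.sum_add_distrib]
    refine Finset.sum_congr rfl fun j _ => ?_
    rw [hcoeff]; ring
  have hA : (∑ j ∈ Finset.range (m + 1),
      (Polynomial.X * (Polynomial.derivative p + p)).coeff j / ((m - j).factorial : ℝ))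
      = (m : ℝ) * uu p m := by
    rw [Finset.sum_range_succ']
    have h0 : (Polynomial.X * (Polynomial.derivative p + p)).coeff 0 = 0 := by
      simp [Polynomial.coeff_X_mul_zero]
    rw [h0]
    simp only [Polynomial.coeff_X_mul, zero_div, add_zero]
    have hB : ∀ i ∈ Finset.range m,
        (Polynomial.derivative p + p).coeff i / (m - (i + 1)).factorial
        = ((i : ℝ) + 1) * p.coeff (i + 1) / ((m - (i+1)).factorial : ℝ)
          + ((m : ℝ) - i) * (p.coeff i / ((m - i).factorial : ℝ)) := by
      intro i hi
      rw [Finset.mem_range] at hi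
      have h1 : (Polynomial.derivative p + p).coeff i
          = p.coeff (i + 1) * ((i : ℝ) + 1) + p.coeff i := by
        simp [Polynomial.coeff_derivative]
      have h2 : (m - i).factorial = (m - i) * (m - (i+1)).factorial := by
        have : m - i = (m - (i+1)) + 1 := by omega
        rw [this, Nat.factorial_succ, ← this]
      have h3 : ((m - i : ℕ) : ℝ) = (m : ℝ) - i := by
        rw [Nat.cast_sub hi.le]
      have h4 : ((m - (i+1)).factorial : ℝ) ≠ 0 := Nat.cast_ne_zero.2 (Nat.factorial_ne_zero _)
      have h5 : ((m - i).factorial : ℝ) = ((m:ℝ) - i) * (m - (i+1)).factorial := by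
        rw [h2]; push_cast [Nat.cast_sub hi.le]; ring
      rw [h1, h5]
      have h6 : (m : ℝ) - i ≠ 0 := by
        have : (i : ℝ) < m := by exact_mod_cast hi
        linarith
      field_simp
    rw [Finset.sum_congr rfl hB, Finset.sum_add_distrib]
    have hBsum : (∑ i ∈ Finset.range m, ((i : ℝ) + 1) * p.coeff (i + 1) / ((m - (i+1)).factorial : ℝ))
        = ∑ j ∈ Finset.range (m + 1), (j : ℝ) * p.coeff j / ((m - j).factorial : ℝ) := by
      rw [Finset.sum_range_succ']
      simp
    have hCsum : (∑ i ∈ Finset.range m, ((m : ℝ) - i) * (p.coeff i / ((m - i).factorial : ℝ)))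
        = ∑ j ∈ Finset.range (m + 1), ((m : ℝ) - j) * (p.coeff j / ((m - j).factorial : ℝ)) := by
      rw [Finset.sum_range_succ]
      simp
    rw [hBsum, hCsum, uu, Finset.mul_sum, ← Finset.sum_add_distrib]
    refine Finset.sum_congr rfl fun j _ => ?_
    ring
  rw [hsplit, hA, uu]; ring

noncomputable def gL (L : List ℝ) (m : ℕ) : ℝ := (L.map fun β => β + (m : ℝ)).prod

lemma uu_QL (L : List ℝ) (m : ℕ) : uu (QL L) m = gL L m / m.factorial := by
  induction L with
  | nil => simpa [QL, gL] using uu_one m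
  | cons β L ih =>
    rw [QL, uu_Tb, ih]
    simp only [gL, List.map_cons, List.prod_cons]
    ring

lemma summable_expser (z : ℂ) : Summable (fun i : ℕ => z ^ i / i.factorial) := by
  refine Summable.of_norm ?_
  have := Real.summable_pow_div_factorial ‖z‖
  refine this.congr fun i => ?_
  simp [norm_div]

lemma exp_tsum (z : ℂ) : Complex.exp z = ∑' i : ℕ, z ^ i / i.factorial := by
  rw [Complex.exp_eq_exp_ℂ, NormedSpace.exp_eq_tsum_div]

lemma tsum_shift_summand (c z : ℂ) (j : ℕ) :
    Summable (fun m : ℕ => if j ≤ m then c * z ^ m / ((m - j).factorial : ℂ) else 0)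
    ∧ (∑' m : ℕ, if j ≤ m then c * z ^ m / ((m - j).factorial : ℂ) else 0)
      = c * z ^ j * Complex.exp z := by
  set F : ℕ → ℂ := fun m => if j ≤ m then c * z ^ m / ((m - j).factorial : ℂ) else 0 with hF
  have hinj : Function.Injective (fun i : ℕ => i + j) := add_left_injective j
  have hsupp : Function.support F ⊆ Set.range (fun i : ℕ => i + j) := by
    intro m hm
    by_cases h : j ≤ m
    · exact ⟨m - j, by simpa using Nat.sub_add_cancel h⟩
    · simp [hF, h] at hm
  have hcomp : ∀ i : ℕ, F (i + j) = (c * z ^ j) * (z ^ i / i.factorial) := by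
    intro i
    have h1 : j ≤ i + j := by omega
    have h2 : i + j - j = i := by omega
    simp only [hF, if_pos h1, h2, pow_add]
    ring
  have hsum : Summable (fun i : ℕ => F (i + j)) := by
    rw [funext hcomp]
    exact (summable_expser z).mul_left _
  constructor
  · exact (hinj.summable_iff (fun m hm => by
      by_contra h
      exact hm (hsupp (Function.mem_support.2 h)))).1 hsum
  · rw [← hinj.tsum_eq hsupp, funext hcomp, tsum_mul_left, ← exp_tsum]

lemma tsum_uu (p : ℝ[X]) (z : ℂ) :
    ∑' m : ℕ, (uu p m : ℂ) * z ^ m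
      = Complex.exp z * (p.map (algebraMap ℝ ℂ)).eval z := by
  set D := p.natDegree + 1 with hD
  set F : ℕ → ℕ → ℂ := fun j m =>
    if j ≤ m then (p.coeff j : ℂ) * z ^ m / ((m - j).factorial : ℂ) else 0 with hFdef
  have step1 : ∀ m : ℕ, (uu p m : ℂ) * z ^ m = ∑ j ∈ Finset.range D, F j m := by
    intro m
    have h1 : (uu p m : ℂ) * z ^ m
        = ∑ j ∈ Finset.range (m + 1), (p.coeff j : ℂ) * z ^ m / ((m - j).factorial : ℂ) := by
      rw [uu]
      push_cast
      rw [Finset.sum_mul]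
      refine Finset.sum_congr rfl fun j _ => ?_
      ring
    have h2 : ∑ j ∈ Finset.range (m + 1), (p.coeff j : ℂ) * z ^ m / ((m - j).factorial : ℂ)
        = ∑ j ∈ Finset.range (m + 1), F j m := by
      refine Finset.sum_congr rfl fun j hj => ?_
      rw [Finset.mem_range] at hj
      rw [hFdef]
      simp only [if_pos (by omega : j ≤ m)]
    set M := max (m + 1) D with hM
    have h3 : ∑ j ∈ Finset.range (m + 1), F j m = ∑ j ∈ Finset.range M, F j m := by
      refine Finset.sum_subset (Finset.range_subset_range.2 (le_max_left _ _)) ?_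
      intro j _ hj
      rw [Finset.mem_range, not_lt] at hj
      simp only [hFdef, if_neg (by omega : ¬ j ≤ m)]
    have h4 : ∑ j ∈ Finset.range D, F j m = ∑ j ∈ Finset.range M, F j m := by
      refine Finset.sum_subset (Finset.range_subset_range.2 (le_max_right _ _)) ?_
      intro j _ hj
      rw [Finset.mem_range, not_lt] at hj
      have : p.coeff j = 0 := Polynomial.coeff_eq_zero_of_natDegree_lt (by omega)
      simp only [hFdef, this, Complex.ofReal_zero, zero_mul, zero_div, ite_self]
    rw [h1, h2, h3, ← h4]
  calc ∑' m : ℕ, (uu p m : ℂ) * z ^ m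
      = ∑' m : ℕ, ∑ j ∈ Finset.range D, F j m := by
        exact tsum_congr step1
    _ = ∑ j ∈ Finset.range D, ∑' m : ℕ, F j m := by
        refine Summable.tsum_finsetSum fun j _ => (tsum_shift_summand (p.coeff j) z j).1
    _ = ∑ j ∈ Finset.range D, (p.coeff j : ℂ) * z ^ j * Complex.exp z := by
        refine Finset.sum_congr rfl fun j _ => (tsum_shift_summand (p.coeff j) z j).2
    _ = Complex.exp z * (p.map (algebraMap ℝ ℂ)).eval z := by
        rw [Polynomial.eval_eq_sum_range' (lt_of_le_of_lt
          Polynomial.natDegree_map_le (by omega : p.natDegree < D))]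
        rw [Finset.mul_sum]
        refine Finset.sum_congr rfl fun j _ => ?_
        rw [Polynomial.coeff_map,
          show (algebraMap ℝ ℂ) (p.coeff j) = (p.coeff j : ℂ) from rfl]
        ring

open Filter Topology in
lemma exists_deriv_zero_left_pos {f f' : ℝ → ℝ} {b c : ℝ} (hcb : c < b)
    (hcont : ContinuousOn f (Set.Iic b))
    (hd : ∀ x < b, HasDerivAt f (f' x) x)
    (hfb : f b = 0) (hlim : Tendsto f atBot (𝓝 0)) (hfc : 0 < f c) :
    ∃ z < b, f' z = 0 := by
  have hev : ∀ᶠ x in atBot, f x ∈ Set.Ioo (-(f c)) (f c) :=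
    hlim.eventually (Ioo_mem_nhds (by linarith) hfc)
  obtain ⟨a, ha1, ha2⟩ := (hev.and (eventually_le_atBot (c - 1))).exists
  have hac : a < c := by linarith
  have hab : a ≤ b := by linarith
  obtain ⟨x₀, hx₀mem, hx₀⟩ := (isCompact_Icc).exists_isMaxOn (Set.nonempty_Icc.2 hab)
    (hcont.mono (fun x hx => hx.2))
  have hcmem : c ∈ Set.Icc a b := ⟨hac.le, hcb.le⟩
  have hfx₀ : f c ≤ f x₀ := hx₀ hcmem
  have hx₀a : x₀ ≠ a := by
    rintro rfl
    exact absurd (lt_of_lt_of_le ha1.2 hfx₀) (lt_irrefl _)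
  have hx₀b : x₀ ≠ b := by
    rintro rfl
    rw [hfb] at hfx₀; linarith
  have hIoo : x₀ ∈ Set.Ioo a b :=
    ⟨lt_of_le_of_ne hx₀mem.1 (Ne.symm hx₀a), lt_of_le_of_ne hx₀mem.2 hx₀b⟩
  have hloc : IsLocalMax f x₀ := hx₀.isLocalMax (Icc_mem_nhds hIoo.1 hIoo.2)
  exact ⟨x₀, hIoo.2, hloc.hasDerivAt_eq_zero (hd x₀ hIoo.2)⟩

open Filter Topology in
lemma exists_deriv_zero_left {f f' : ℝ → ℝ} {b c : ℝ} (hcb : c < b)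
    (hcont : ContinuousOn f (Set.Iic b))
    (hd : ∀ x < b, HasDerivAt f (f' x) x)
    (hfb : f b = 0) (hlim : Tendsto f atBot (𝓝 0)) (hfc : f c ≠ 0) :
    ∃ z < b, f' z = 0 := by
  rcases hfc.lt_or_gt with h | h
  · obtain ⟨z, hz, hz0⟩ := exists_deriv_zero_left_pos (f := fun x => -f x) (f' := fun x => -f' x)
      hcb hcont.neg (fun x hx => (hd x hx).neg) (by simp [hfb])
      (by simpa using hlim.neg) (by simpa using h)
    exact ⟨z, hz, by simpa using hz0⟩
  · exact exists_deriv_zero_left_pos hcb hcont hd hfb hlim h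

lemma Tb_monic (β : ℝ) {p : ℝ[X]} (hp : p.Monic) :
    (Tb β p).Monic ∧ (Tb β p).natDegree = p.natDegree + 1 := by
  have hp0 : p ≠ 0 := hp.ne_zero
  have hXp : (Polynomial.X * p).Monic := Polynomial.monic_X.mul hp
  have hd1 : (Polynomial.X * Polynomial.derivative p + Polynomial.C β * p).degree
      < (Polynomial.X * p).degree := by
    have hXp' : (Polynomial.X * p).degree = (p * Polynomial.X).degree := by rw [mul_comm]
    have h2 : (Polynomial.C β * p).degree < (Polynomial.X * p).degree := by
      have hle : (Polynomial.C β * p).degree ≤ p.degree :=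
        le_trans (Polynomial.degree_mul_le _ _)
          (by simpa using add_le_add_left (Polynomial.degree_C_le (a := β)) p.degree)
      refine lt_of_le_of_lt hle ?_
      rw [hXp']
      exact Polynomial.degree_lt_degree_mul_X hp0
    have h1 : (Polynomial.X * Polynomial.derivative p).degree
        < (Polynomial.X * p).degree := by
      rcases eq_or_ne (Polynomial.derivative p) 0 with h | h
      · rw [h, mul_zero, Polynomial.degree_zero]
        exact Ne.bot_lt (by simp [Polynomial.degree_eq_bot, hp0])
      · rw [Polynomial.degree_mul, Polynomial.degree_mul, Polynomial.degree_X]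
        exact WithBot.add_lt_add_left (by simp) (Polynomial.degree_derivative_lt hp0)
    exact lt_of_le_of_lt (Polynomial.degree_add_le _ _) (max_lt h1 h2)
  have hTb : Tb β p = Polynomial.X * p
      + (Polynomial.X * Polynomial.derivative p + Polynomial.C β * p) := by
    rw [Tb]; ring
  constructor
  · rw [hTb]; exact hXp.add_of_left hd1
  · rw [hTb]
    have := Polynomial.degree_add_eq_left_of_degree_lt hd1
    have hnd := Polynomial.natDegree_eq_of_degree_eq this
    rw [hnd, Polynomial.natDegree_mul Polynomial.X_ne_zero hp0, Polynomial.natDegree_X]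
    omega

noncomputable def hfun (β : ℝ) (p : ℝ[X]) (z : ℝ) : ℝ :=
  (-z) ^ β * (Real.exp z * p.eval z)

lemma hfun_continuous (β : ℝ) (p : ℝ[X]) (hβ : 0 < β) : Continuous (hfun β p) := by
  have h1 : Continuous fun z : ℝ => (-z) ^ β :=
    (Real.continuous_rpow_const hβ.le).comp continuous_neg
  exact h1.mul (Real.continuous_exp.mul (Polynomial.continuous p))

lemma hfun_hasDerivAt (β : ℝ) (p : ℝ[X]) {z : ℝ} (hz : z < 0) :
    HasDerivAt (hfun β p) (-((-z) ^ (β - 1) * Real.exp z * (Tb β p).eval z)) z := by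
  have hz' : (0:ℝ) < -z := by linarith
  have h1 : HasDerivAt (fun w : ℝ => (-w) ^ β) (β * (-z) ^ (β - 1) * (-1)) z := by
    have hg : HasDerivAt (fun x : ℝ => x ^ β) (β * (-z) ^ (β - 1)) (-z) :=
      Real.hasDerivAt_rpow_const (Or.inl hz'.ne')
    exact hg.comp z (hasDerivAt_neg z)
  have h2 : HasDerivAt (fun w : ℝ => Real.exp w * p.eval w)
      (Real.exp z * p.eval z + Real.exp z * (Polynomial.derivative p).eval z) z :=
    (Real.hasDerivAt_exp z).mul (p.hasDerivAt z)
  have h3 := h1.mul h2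
  refine HasDerivAt.congr_deriv h3 ?_
  have hqe : (Tb β p).eval z
      = z * ((Polynomial.derivative p).eval z + p.eval z) + β * p.eval z := by
    simp [Tb]
  have hsplit : (-z) ^ β = (-z) ^ (β - 1) * (-z) := by
    have h := Real.rpow_add hz' (β - 1) 1
    rw [Real.rpow_one] at h
    rw [← h]
    norm_num
  rw [hqe, hsplit]
  ring

lemma hfun_zero (β : ℝ) (p : ℝ[X]) (hβ : 0 < β) : hfun β p 0 = 0 := by
  simp [hfun, Real.zero_rpow hβ.ne']

lemma hfun_ne (β : ℝ) (p : ℝ[X]) {z : ℝ} (hz : z < 0) (hpe : p.eval z ≠ 0) :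
    hfun β p z ≠ 0 :=
  mul_ne_zero (Real.rpow_pos_of_pos (by linarith) β).ne'
    (mul_ne_zero (Real.exp_ne_zero z) hpe)

open Filter Topology in
lemma hfun_atBot (β : ℝ) (p : ℝ[X]) : Tendsto (hfun β p) atBot (𝓝 0) := by
  set d := p.natDegree with hd
  have hcomp : ∀ᶠ x in atTop, hfun β p (-x)
      = ∑ i ∈ Finset.range (d + 1),
        p.coeff i * (-1 : ℝ) ^ i * (x ^ (β + i) * Real.exp (-x)) := by
    filter_upwards [eventually_gt_atTop (0:ℝ)] with x hx
    have hpe : p.eval (-x) = ∑ i ∈ Finset.range (d + 1), p.coeff i * (-x) ^ i :=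
      Polynomial.eval_eq_sum_range' (Nat.lt_succ_self _) _
    have h0 : hfun β p (-x) = x ^ β * (Real.exp (-x) * p.eval (-x)) := by
      simp [hfun]
    rw [h0, hpe, Finset.mul_sum, Finset.mul_sum]
    refine Finset.sum_congr rfl fun i _ => ?_
    have h1 : x ^ (β + (i:ℝ)) = x ^ β * x ^ (i:ℕ) := by
      rw [Real.rpow_add hx, Real.rpow_natCast]
    rw [h1, neg_pow]
    ring
  have hterm : ∀ i : ℕ, Tendsto
      (fun x : ℝ => p.coeff i * (-1 : ℝ) ^ i * (x ^ (β + i) * Real.exp (-x)))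
      atTop (𝓝 0) := by
    intro i
    have h2 := tendsto_rpow_mul_exp_neg_mul_atTop_nhds_zero (β + i) 1 one_pos
    have h3 : Tendsto (fun x : ℝ => x ^ (β + (i:ℝ)) * Real.exp (-x)) atTop (𝓝 0) := by
      refine h2.congr fun x => ?_
      norm_num
    simpa using h3.const_mul (p.coeff i * (-1 : ℝ) ^ i)
  have hsum : Tendsto (fun x : ℝ => ∑ i ∈ Finset.range (d + 1),
      p.coeff i * (-1 : ℝ) ^ i * (x ^ (β + i) * Real.exp (-x))) atTop (𝓝 0) := by
    have := tendsto_finset_sum (Finset.range (d + 1)) (fun i _ => hterm i)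
    simpa using this
  have h5 : Tendsto (fun x : ℝ => hfun β p (-x)) atTop (𝓝 0) := Filter.Tendsto.congr' (hcomp.mono fun x hx => hx.symm) hsum
  have h6 := h5.comp tendsto_neg_atBot_atTop
  refine h6.congr fun z => ?_
  simp [Function.comp]

open Filter Topology in
lemma roots_step (p : ℝ[X]) (β : ℝ) (hβ : 0 < β) (hp : p.Monic)
    (hcard : Multiset.card p.roots = p.natDegree)
    (hneg : ∀ x ∈ p.roots, x < 0) :
    (Tb β p).Monic ∧ (Tb β p).natDegree = p.natDegree + 1 ∧
      Multiset.card (Tb β p).roots = p.natDegree + 1 ∧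
      ∀ x ∈ (Tb β p).roots, x < 0 := by
  classical
  obtain ⟨hq, hqdeg⟩ := Tb_monic β hp
  set q := Tb β p with hqdef
  have hp0 : p ≠ 0 := hp.ne_zero
  have hq0 : q ≠ 0 := hq.ne_zero
  set d := p.natDegree with hd
  -- the auxiliary function
  have hcrit : ∀ z : ℝ, z < 0 → -((-z) ^ (β - 1) * Real.exp z * q.eval z) = 0 →
      q.eval z = 0 := by
    intro z hz h0
    have h1 : (0:ℝ) < (-z) ^ (β - 1) := Real.rpow_pos_of_pos (by linarith) _
    have h2 := Real.exp_pos z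
    have h3 : (-z) ^ (β - 1) * Real.exp z * q.eval z = 0 := by linarith
    exact (mul_eq_zero.1 h3).resolve_left (mul_pos h1 h2).ne'
  set s : Finset ℝ := insert (0:ℝ) p.roots.toFinset with hs
  have hs_ne : s.Nonempty := ⟨0, Finset.mem_insert_self _ _⟩
  set x₁ := s.min' hs_ne with hx₁
  have hx₁le : ∀ x ∈ s, x₁ ≤ x := fun x hx => Finset.min'_le s x hx
  have hx₁mem : x₁ ∈ s := Finset.min'_mem s hs_ne
  have hsle0 : ∀ x ∈ s, x ≤ 0 := by
    intro x hx
    rcases Finset.mem_insert.1 hx with rfl | hx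
    · exact le_rfl
    · exact (hneg x (Multiset.mem_toFinset.1 hx)).le
  have hx₁0 : x₁ ≤ 0 := hsle0 _ hx₁mem
  have hfs : ∀ x ∈ s, hfun β p x = 0 := by
    intro x hx
    rcases Finset.mem_insert.1 hx with rfl | hx
    · exact hfun_zero β p hβ
    · have : p.eval x = 0 := (Polynomial.mem_roots hp0).1 (Multiset.mem_toFinset.1 hx)
      simp [hfun, this]
  set t : Finset ℝ := q.roots.toFinset.filter (fun z => x₁ < z ∧ z < 0) with ht
  -- interleaving: between consecutive points of s there is a root of q
  have hinter : s.card ≤ (t \ s).card + 1 := by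
    refine Finset.card_le_diff_of_interleaved ?_
    intro x hx y hy hxy _
    have hy0 : y ≤ 0 := hsle0 y hy
    obtain ⟨z, hzI, hz0⟩ := exists_hasDerivAt_eq_zero (f := hfun β p)
      (f' := fun w => -((-w) ^ (β - 1) * Real.exp w * q.eval w)) hxy
      (hfun_continuous β p hβ).continuousOn (by rw [hfs x hx, hfs y hy])
      (fun w hw => hfun_hasDerivAt β p (lt_of_lt_of_le hw.2 hy0))
    have hzlt0 : z < 0 := lt_of_lt_of_le hzI.2 hy0
    have hqz : q.eval z = 0 := hcrit z hzlt0 hz0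
    refine ⟨z, ?_, hzI.1, hzI.2⟩
    rw [ht, Finset.mem_filter, Multiset.mem_toFinset]
    exact ⟨(Polynomial.mem_roots hq0).2 hqz,
      lt_of_le_of_lt (hx₁le x hx) hzI.1, hzlt0⟩
  -- leftmost root of q
  have hleft : ∃ z₀ < x₁, q.eval z₀ = 0 := by
    have hx₁1 : x₁ - 1 < 0 := by linarith
    have hpe : p.eval (x₁ - 1) ≠ 0 := by
      intro hroot
      have : (x₁ - 1) ∈ s := Finset.mem_insert_of_mem (Multiset.mem_toFinset.2
        ((Polynomial.mem_roots hp0).2 hroot))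
      have := hx₁le _ this
      linarith
    obtain ⟨z₀, hz₀, hz₀'⟩ := exists_deriv_zero_left (b := x₁) (c := x₁ - 1)
      (f := hfun β p) (f' := fun w => -((-w) ^ (β - 1) * Real.exp w * q.eval w))
      (by linarith) (hfun_continuous β p hβ).continuousOn
      (fun x hx => hfun_hasDerivAt β p (lt_of_lt_of_le hx hx₁0))
      (hfs x₁ hx₁mem) (hfun_atBot β p) (hfun_ne β p hx₁1 hpe)
    exact ⟨z₀, hz₀, hcrit z₀ (lt_of_lt_of_le hz₀ hx₁0) hz₀'⟩
  obtain ⟨z₀, hz₀x₁, hz₀root⟩ := hleft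
  have hz₀0 : z₀ < 0 := lt_of_lt_of_le hz₀x₁ hx₁0
  -- the multiset of found roots
  set R : Multiset ℝ := (p.roots - p.roots.dedup) + ((t \ s).val + {z₀}) with hR
  have hkey : ∀ x, p.rootMultiplicity x - 1 ≤ q.rootMultiplicity x := by
    intro x
    set k := p.rootMultiplicity x - 1 with hk
    have hdvd1 : (Polynomial.X - Polynomial.C x) ^ k ∣ p :=
      dvd_trans (pow_dvd_pow _ (Nat.sub_le _ _)) (Polynomial.pow_rootMultiplicity_dvd p x)
    have hdvd2 : (Polynomial.X - Polynomial.C x) ^ k ∣ Polynomial.derivative p := by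
      rcases eq_or_ne (Polynomial.derivative p) 0 with h | h
      · rw [h]; exact dvd_zero _
      · exact dvd_trans
          (pow_dvd_pow _ (Polynomial.rootMultiplicity_sub_one_le_derivative_rootMultiplicity p x))
          (Polynomial.pow_rootMultiplicity_dvd _ _)
    have hdvdq : (Polynomial.X - Polynomial.C x) ^ k ∣ q := by
      rw [hqdef, Tb]
      exact dvd_add (Dvd.dvd.mul_left (dvd_add hdvd2 hdvd1) _) (Dvd.dvd.mul_left hdvd1 _)
    exact (Polynomial.le_rootMultiplicity_iff hq0).2 hdvdq
  have hRle : R ≤ q.roots := by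
    rw [Multiset.le_iff_count]
    intro x
    rw [hR]
    simp only [Multiset.count_add, Multiset.count_sub, Multiset.count_singleton]
    by_cases hx : x ∈ p.roots
    · have h1 : x ∈ s := Finset.mem_insert_of_mem (Multiset.mem_toFinset.2 hx)
      have h2 : Multiset.count x (t \ s).val = 0 := by
        rw [Multiset.count_eq_zero]
        intro hmem
        exact (Finset.mem_sdiff.1 hmem).2 h1
      have h3 : ¬ (x = z₀) := by
        intro h
        have := hx₁le x h1
        rw [h] at this
        linarith
      have hdedup : Multiset.count x p.roots.dedup = 1 := by
        rw [Multiset.count_dedup, if_pos hx]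
      rw [h2, hdedup, if_neg h3, Polynomial.count_roots, Polynomial.count_roots]
      simpa using hkey x
    · have h1 : Multiset.count x p.roots = 0 := Multiset.count_eq_zero.2 hx
      have h1' : Multiset.count x p.roots.dedup = 0 := by
        rw [Multiset.count_dedup, if_neg hx]
      rw [h1, h1']
      by_cases hx2 : x ∈ t \ s
      · have hxt : x ∈ t := (Finset.mem_sdiff.1 hx2).1
        have hxroot : x ∈ q.roots := Multiset.mem_toFinset.1 (Finset.mem_filter.1 hxt).1
        have hxgt : x₁ < x := (Finset.mem_filter.1 hxt).2.1
        have hxz₀ : ¬ (x = z₀) := by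
          intro h
          rw [h] at hxgt
          linarith
        have hcnt : Multiset.count x (t \ s).val = 1 :=
          Multiset.count_eq_one_of_mem (t \ s).nodup hx2
        rw [hcnt, if_neg hxz₀]
        simpa using Multiset.one_le_count_iff_mem.2 hxroot
      · have hcnt : Multiset.count x (t \ s).val = 0 :=
          Multiset.count_eq_zero.2 (fun h => hx2 h)
        rw [hcnt]
        by_cases hxz : x = z₀
        · subst hxz
          have : x ∈ q.roots := (Polynomial.mem_roots hq0).2 hz₀root
          simpa using Multiset.one_le_count_iff_mem.2 this
        · simp [hxz]
  have hcard_dedup : Multiset.card p.roots.dedup = p.roots.toFinset.card := rfl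
  have hcardR : Multiset.card R
      = (Multiset.card p.roots - p.roots.toFinset.card) + ((t \ s).card + 1) := by
    rw [hR]
    rw [Multiset.card_add, Multiset.card_add,
      Multiset.card_sub (Multiset.dedup_le _), hcard_dedup, Multiset.card_singleton]
    rfl
  have hscard : s.card = p.roots.toFinset.card + 1 := by
    have h0mem : (0:ℝ) ∉ p.roots.toFinset := fun h0 =>
      absurd (hneg 0 (Multiset.mem_toFinset.1 h0)) (lt_irrefl 0)
    rw [hs, Finset.card_insert_of_notMem h0mem]
  have htf_le : p.roots.toFinset.card ≤ Multiset.card p.roots :=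
    Multiset.toFinset_card_le _
  have hbound : d + 1 ≤ Multiset.card R := by
    have h1 : p.roots.toFinset.card ≤ (t \ s).card := by omega
    omega
  have hcardq : Multiset.card q.roots ≤ d + 1 := by
    have := Polynomial.card_roots' q
    omega
  have hEq : q.roots = R :=
    (Multiset.eq_of_le_of_card_le hRle (by omega)).symm
  refine ⟨hq, hqdeg, ?_, ?_⟩
  · have := Multiset.card_le_card hRle
    omega
  · intro x hx
    rw [hEq] at hx
    rcases Multiset.mem_add.1 hx with hx | hx
    · exact hneg x (Multiset.mem_of_le (Multiset.sub_le_self _ _) hx)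
    · rcases Multiset.mem_add.1 hx with hx | hx
      · have hxt : x ∈ t := (Finset.mem_sdiff.1 hx).1
        exact (Finset.mem_filter.1 hxt).2.2
      · rw [Multiset.mem_singleton] at hx
        rw [hx]
        exact hz₀0

lemma QL_roots (L : List ℝ) (hL : ∀ β ∈ L, 0 < β) :
    (QL L).Monic ∧ (QL L).natDegree = L.length ∧
      Multiset.card (QL L).roots = L.length ∧ ∀ x ∈ (QL L).roots, x < 0 := by
  induction L with
  | nil =>
    refine ⟨Polynomial.monic_one, ?_, ?_, ?_⟩ <;> simp [QL]
  | cons β L ih =>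
    obtain ⟨h1, h2, h3, h4⟩ := ih (fun γ hγ => hL γ (List.mem_cons_of_mem _ hγ))
    have hβ : 0 < β := hL β List.mem_cons_self
    have hstep := roots_step (QL L) β hβ h1 (by rw [h3, h2]) h4
    have hcons : QL (β :: L) = Tb β (QL L) := rfl
    refine ⟨by rw [hcons]; exact hstep.1, ?_, ?_, ?_⟩
    · rw [hcons, hstep.2.1, h2, List.length_cons]
    · rw [hcons, hstep.2.2.1, h2, List.length_cons]
    · rw [hcons]; exact hstep.2.2.2

lemma list_range_prod (N : ℕ) (f : ℕ → ℝ) :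
    ((List.range N).map f).prod = ∏ i ∈ Finset.range N, f i := by
  induction N with
  | zero => simp
  | succ N ih =>
    rw [List.range_succ, List.map_append, List.prod_append, Finset.prod_range_succ, ih]
    simp

lemma asc_eval_prod (N : ℕ) (x : ℝ) :
    (ascPochhammer ℝ N).eval x = ∏ i ∈ Finset.range N, (x + i) := by
  induction N with
  | zero => simp
  | succ N ih =>
    rw [ascPochhammer_succ_right, Finset.prod_range_succ, ← ih]
    simp

lemma asc_ratio (b' : ℝ) (n' m : ℕ) :
    (ascPochhammer ℝ n').eval b' * (ascPochhammer ℝ m).eval (b' + n')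
      = (ascPochhammer ℝ m).eval b' * (ascPochhammer ℝ n').eval (b' + m) := by
  have e1 := congrArg (Polynomial.eval b') (ascPochhammer_mul (S := ℝ) n' m)
  have e2 := congrArg (Polynomial.eval b') (ascPochhammer_mul (S := ℝ) m n')
  simp only [Polynomial.eval_mul, Polynomial.eval_comp, Polynomial.eval_add,
    Polynomial.eval_X, Polynomial.eval_natCast] at e1 e2
  rw [e1, e2, Nat.add_comm]

noncomputable def Lof (q : ℕ) (b : ℕ → ℝ) (n : ℕ → ℕ) : List ℝ :=
  (List.range q).flatMap (fun k => (List.range (n k)).map (fun j : ℕ => b k + (j : ℝ)))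

lemma Lof_pos (q : ℕ) (b : ℕ → ℝ) (n : ℕ → ℕ) (hb : ∀ k < q, 0 < b k) :
    ∀ β ∈ Lof q b n, 0 < β := by
  intro β hβ
  rw [Lof, List.mem_flatMap] at hβ
  obtain ⟨k, hk, hmem⟩ := hβ
  rw [List.mem_range] at hk
  rw [List.mem_map] at hmem
  obtain ⟨j, _, rfl⟩ := hmem
  exact add_pos_of_pos_of_nonneg (hb k hk) (Nat.cast_nonneg j)

lemma gL_Lof (q : ℕ) (b : ℕ → ℝ) (n : ℕ → ℕ) (m : ℕ) :
    gL (Lof q b n) m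
      = ∏ k ∈ Finset.range q, (ascPochhammer ℝ (n k)).eval (b k + m) := by
  induction q with
  | zero => simp [Lof, gL]
  | succ q ih =>
    rw [Finset.prod_range_succ, ← ih]
    have hL : Lof (q+1) b n
        = Lof q b n ++ (List.range (n q)).map (fun j : ℕ => b q + (j : ℝ)) := by
      rw [Lof, Lof, List.range_succ, List.flatMap_append]
      simp
    rw [hL, gL, List.map_append, List.prod_append, ← gL]
    congr 1
    rw [List.map_map, list_range_prod, asc_eval_prod]
    refine Finset.prod_congr rfl fun j _ => ?_
    simp [Function.comp]
    ring

end Aux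

/-- `qFq(a; b; z)` as an entire function on `ℂ` with real parameters. -/
noncomputable def qFqC (q : ℕ) (a b : ℕ → ℝ) (z : ℂ) : ℂ :=
  ∑' m : ℕ, ((∏ k ∈ Finset.range q, (ascPochhammer ℝ m).eval (a k)) /
      ((∏ k ∈ Finset.range q, (ascPochhammer ℝ m).eval (b k)) * m.factorial) : ℝ) * z ^ m

theorem stmt_13 (q : ℕ) (a b : ℕ → ℝ) (hb : ∀ k < q, 0 < b k)
    (n : ℕ → ℕ) (hab : ∀ k < q, a k = b k + n k) :
    ∃ P : Polynomial ℝ,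
      (∀ z : ℂ, qFqC q a b z = Complex.exp z * (P.map (algebraMap ℝ ℂ)).eval z) ∧
      ∀ z : ℂ, qFqC q a b z = 0 → ∃ x : ℝ, x < 0 ∧ z = (x : ℂ) := by
  classical
  set L := Lof q b n with hL
  set D : ℝ := ∏ k ∈ Finset.range q, (ascPochhammer ℝ (n k)).eval (b k) with hD
  have hD_pos : 0 < D :=
    Finset.prod_pos (fun k hk => ascPochhammer_pos _ _ (hb k (Finset.mem_range.1 hk)))
  obtain ⟨hmonic, hdeg, hcards, hroots_neg⟩ := QL_roots L (Lof_pos q b n hb)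
  have hcoeff : ∀ m : ℕ,
      ((∏ k ∈ Finset.range q, (ascPochhammer ℝ m).eval (a k)) /
        ((∏ k ∈ Finset.range q, (ascPochhammer ℝ m).eval (b k)) * m.factorial))
      = D⁻¹ * (gL L m / m.factorial) := by
    intro m
    have hid : D * (∏ k ∈ Finset.range q, (ascPochhammer ℝ m).eval (a k))
        = (∏ k ∈ Finset.range q, (ascPochhammer ℝ m).eval (b k)) * gL L m := by
      rw [hL, gL_Lof, hD, ← Finset.prod_mul_distrib, ← Finset.prod_mul_distrib]
      refine Finset.prod_congr rfl fun k hk => ?_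
      rw [hab k (Finset.mem_range.1 hk)]
      exact asc_ratio (b k) (n k) m
    have hPd_pos : 0 < ∏ k ∈ Finset.range q, (ascPochhammer ℝ m).eval (b k) :=
      Finset.prod_pos (fun k hk => ascPochhammer_pos _ _ (hb k (Finset.mem_range.1 hk)))
    have hfact : (0:ℝ) < (m.factorial : ℝ) := Nat.cast_pos.2 (Nat.factorial_pos m)
    have hPn : (∏ k ∈ Finset.range q, (ascPochhammer ℝ m).eval (a k))
        = ((∏ k ∈ Finset.range q, (ascPochhammer ℝ m).eval (b k)) * gL L m) / D := by
      rw [eq_div_iff hD_pos.ne', mul_comm]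
      exact hid
    rw [hPn]
    field_simp
  have hser : ∀ z : ℂ, qFqC q a b z
      = Complex.exp z * ((Polynomial.C D⁻¹ * QL L).map (algebraMap ℝ ℂ)).eval z := by
    intro z
    rw [qFqC]
    have h1 : ∀ m : ℕ,
        (((∏ k ∈ Finset.range q, (ascPochhammer ℝ m).eval (a k)) /
          ((∏ k ∈ Finset.range q, (ascPochhammer ℝ m).eval (b k)) * m.factorial) : ℝ) : ℂ)
          * z ^ m
        = ((D⁻¹ : ℝ) : ℂ) * ((uu (QL L) m : ℂ) * z ^ m) := by
      intro m
      rw [hcoeff m, uu_QL]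
      push_cast
      ring
    rw [tsum_congr h1, tsum_mul_left, tsum_uu]
    rw [Polynomial.map_mul, Polynomial.map_C, Polynomial.eval_mul, Polynomial.eval_C]
    rw [show (algebraMap ℝ ℂ) D⁻¹ = ((D⁻¹ : ℝ) : ℂ) from rfl]
    ring
  refine ⟨Polynomial.C D⁻¹ * QL L, hser, ?_⟩
  intro z hz
  rw [hser z] at hz
  have hzero : ((QL L).map (algebraMap ℝ ℂ)).eval z = 0 := by
    rw [Polynomial.map_mul, Polynomial.map_C, Polynomial.eval_mul, Polynomial.eval_C] at hz
    have hD' : (algebraMap ℝ ℂ) D⁻¹ ≠ 0 := by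
      rw [show (algebraMap ℝ ℂ) D⁻¹ = ((D⁻¹ : ℝ) : ℂ) from rfl]
      exact_mod_cast inv_ne_zero hD_pos.ne'
    have hexp := Complex.exp_ne_zero z
    rcases mul_eq_zero.1 hz with h | h
    · exact absurd h hexp
    · rcases mul_eq_zero.1 h with h' | h'
      · exact absurd h' hD'
      · exact h'
  have hsplit : QL L
      = (Multiset.map (fun r => Polynomial.X - Polynomial.C r) (QL L).roots).prod :=
    Polynomial.Splits.eq_prod_roots_of_monic
      (Polynomial.splits_iff_card_roots.2 (by rw [hcards, hdeg])) hmonic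
  rw [hsplit, Polynomial.map_multiset_prod, Multiset.map_map,
    Polynomial.eval_multiset_prod, Multiset.map_map] at hzero
  have h0mem := Multiset.prod_eq_zero_iff.1 hzero
  rw [Multiset.mem_map] at h0mem
  obtain ⟨r, hr, hf0⟩ := h0mem
  refine ⟨r, hroots_neg r hr, ?_⟩
  simp only [Function.comp, Polynomial.map_sub, Polynomial.map_X, Polynomial.map_C,
    Polynomial.eval_sub, Polynomial.eval_X, Polynomial.eval_C] at hf0
  have : z - ((r : ℝ) : ℂ) = 0 := by
    symm at hf0
    simpa using hf0.symm
  rw [sub_eq_zero] at this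
  exact this
end

section
/- Let M(μ) = ∫₀^1 t^{μ−1} w(t) dt where w ≥ 0 on (0,1) and M(0) < ∞. Then for all μ ≥ 0 and α, β > 0: 0 ≤ M(μ)M(μ+α+β) − M(μ+α)M(μ+β) ≤ (1/4) M(μ)². -/
open MeasureTheory

private lemma integ_aux (w : ℝ → ℝ) (hw : ∀ t ∈ Set.Ioo (0 : ℝ) 1, 0 ≤ w t)
    (hM0 : IntegrableOn (fun t => t ^ ((0 : ℝ) - 1) * w t) (Set.Ioo (0 : ℝ) 1))
    (γ : ℝ) (hγ : 0 ≤ γ) :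
    IntegrableOn (fun t => t ^ (γ - 1) * w t) (Set.Ioo (0 : ℝ) 1) := by
  have hmem : ∀ᵐ t ∂(volume.restrict (Set.Ioo (0:ℝ) 1)), t ∈ Set.Ioo (0:ℝ) 1 :=
    ae_restrict_mem measurableSet_Ioo
  have hm : AEStronglyMeasurable (fun t => t ^ (γ - 1) * w t)
      (volume.restrict (Set.Ioo (0:ℝ) 1)) := by
    have h2 : AEStronglyMeasurable (fun t : ℝ => t ^ γ)
        (volume.restrict (Set.Ioo (0:ℝ) 1)) :=
      (Real.continuous_rpow_const hγ).aestronglyMeasurable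
    refine (h2.mul hM0.aestronglyMeasurable).congr ?_
    filter_upwards [hmem] with t ht
    simp only [Pi.mul_apply]
    rw [← mul_assoc, ← Real.rpow_add ht.1, show γ + ((0:ℝ) - 1) = γ - 1 by ring]
  refine hM0.mono' hm ?_
  filter_upwards [hmem] with t ht
  have h1 : 0 ≤ t ^ (γ - 1) := Real.rpow_nonneg ht.1.le _
  rw [Real.norm_eq_abs, abs_of_nonneg (mul_nonneg h1 (hw t ht))]
  exact mul_le_mul_of_nonneg_right
    (Real.rpow_le_rpow_of_exponent_ge ht.1 ht.2.le (by linarith)) (hw t ht)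

theorem stmt_15 (w : ℝ → ℝ) (hw : ∀ t ∈ Set.Ioo (0 : ℝ) 1, 0 ≤ w t)
    (hM0 : IntegrableOn (fun t => t ^ ((0 : ℝ) - 1) * w t) (Set.Ioo (0 : ℝ) 1)) :
    ∀ μ α β : ℝ, 0 ≤ μ → 0 < α → 0 < β →
      0 ≤ (∫ t in Set.Ioo (0 : ℝ) 1, t ^ (μ - 1) * w t) *
            (∫ t in Set.Ioo (0 : ℝ) 1, t ^ (μ + α + β - 1) * w t) -
          (∫ t in Set.Ioo (0 : ℝ) 1, t ^ (μ + α - 1) * w t) *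
            (∫ t in Set.Ioo (0 : ℝ) 1, t ^ (μ + β - 1) * w t) ∧
      (∫ t in Set.Ioo (0 : ℝ) 1, t ^ (μ - 1) * w t) *
            (∫ t in Set.Ioo (0 : ℝ) 1, t ^ (μ + α + β - 1) * w t) -
          (∫ t in Set.Ioo (0 : ℝ) 1, t ^ (μ + α - 1) * w t) *
            (∫ t in Set.Ioo (0 : ℝ) 1, t ^ (μ + β - 1) * w t) ≤
        (1 / 4) * (∫ t in Set.Ioo (0 : ℝ) 1, t ^ (μ - 1) * w t) ^ 2 := by
  intro μ α β hμ hα hβ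
  set S := Set.Ioo (0:ℝ) 1 with hS
  set ρ : ℝ → ℝ := fun t => t ^ (μ - 1) * w t with hρdef
  set f : ℝ → ℝ := fun t => t ^ α with hfdef
  set g : ℝ → ℝ := fun t => t ^ β with hgdef
  -- rewrite the three shifted integrals
  have eA : (∫ t in S, t ^ (μ + α - 1) * w t) = ∫ t in S, f t * ρ t := by
    refine setIntegral_congr_fun measurableSet_Ioo fun t ht => ?_
    simp only [hρdef, hfdef]
    rw [← mul_assoc, ← Real.rpow_add ht.1, show α + (μ - 1) = μ + α - 1 by ring]
  have eB : (∫ t in S, t ^ (μ + β - 1) * w t) = ∫ t in S, g t * ρ t := by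
    refine setIntegral_congr_fun measurableSet_Ioo fun t ht => ?_
    simp only [hρdef, hgdef]
    rw [← mul_assoc, ← Real.rpow_add ht.1, show β + (μ - 1) = μ + β - 1 by ring]
  have eC : (∫ t in S, t ^ (μ + α + β - 1) * w t) = ∫ t in S, f t * g t * ρ t := by
    refine setIntegral_congr_fun measurableSet_Ioo fun t ht => ?_
    simp only [hρdef, hfdef, hgdef]
    rw [← mul_assoc, mul_assoc (t ^ α), ← Real.rpow_add ht.1, ← Real.rpow_add ht.1,
      show α + (β + (μ - 1)) = μ + α + β - 1 by ring]
  rw [eA, eB, eC]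
  -- integrability
  have hI : IntegrableOn ρ S := integ_aux w hw hM0 μ hμ
  have hA : IntegrableOn (fun t => f t * ρ t) S := by
    refine (integ_aux w hw hM0 (μ + α) (by linarith)).congr_fun ?_ measurableSet_Ioo
    intro t ht
    simp only [hρdef, hfdef]
    rw [← mul_assoc, ← Real.rpow_add ht.1, show α + (μ - 1) = μ + α - 1 by ring]
  have hB : IntegrableOn (fun t => g t * ρ t) S := by
    refine (integ_aux w hw hM0 (μ + β) (by linarith)).congr_fun ?_ measurableSet_Ioo
    intro t ht
    simp only [hρdef, hgdef]
    rw [← mul_assoc, ← Real.rpow_add ht.1, show β + (μ - 1) = μ + β - 1 by ring]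
  have hC : IntegrableOn (fun t => f t * g t * ρ t) S := by
    refine (integ_aux w hw hM0 (μ + α + β) (by linarith)).congr_fun ?_ measurableSet_Ioo
    intro t ht
    simp only [hρdef, hfdef, hgdef]
    rw [← mul_assoc, mul_assoc (t ^ α), ← Real.rpow_add ht.1, ← Real.rpow_add ht.1,
      show α + (β + (μ - 1)) = μ + α + β - 1 by ring]
  set I := ∫ t in S, ρ t with hIdef
  set A := ∫ t in S, f t * ρ t with hAdef
  set B := ∫ t in S, g t * ρ t with hBdef
  set C := ∫ t in S, f t * g t * ρ t with hCdef
  -- pointwise facts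
  have hρ0 : ∀ t ∈ S, 0 ≤ ρ t := fun t ht =>
    mul_nonneg (Real.rpow_nonneg ht.1.le _) (hw t ht)
  have hf0 : ∀ t ∈ S, 0 ≤ f t := fun t ht => Real.rpow_nonneg ht.1.le _
  have hg0 : ∀ t ∈ S, 0 ≤ g t := fun t ht => Real.rpow_nonneg ht.1.le _
  have hf1 : ∀ t ∈ S, f t ≤ 1 := fun t ht => Real.rpow_le_one ht.1.le ht.2.le hα.le
  have hg1 : ∀ t ∈ S, g t ≤ 1 := fun t ht => Real.rpow_le_one ht.1.le ht.2.le hβ.le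
  -- scalar inequalities
  have hI0 : 0 ≤ I := setIntegral_nonneg measurableSet_Ioo hρ0
  have hA0 : 0 ≤ A := setIntegral_nonneg measurableSet_Ioo fun t ht =>
    mul_nonneg (hf0 t ht) (hρ0 t ht)
  have hB0 : 0 ≤ B := setIntegral_nonneg measurableSet_Ioo fun t ht =>
    mul_nonneg (hg0 t ht) (hρ0 t ht)
  have hAI : A ≤ I := setIntegral_mono_on hA hI measurableSet_Ioo fun t ht => by
    nlinarith [hf1 t ht, hρ0 t ht, hf0 t ht]
  have hBI : B ≤ I := setIntegral_mono_on hB hI measurableSet_Ioo fun t ht => by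
    nlinarith [hg1 t ht, hρ0 t ht, hg0 t ht]
  have hCA : C ≤ A := setIntegral_mono_on hC hA measurableSet_Ioo fun t ht => by
    nlinarith [hg1 t ht, mul_nonneg (hf0 t ht) (hρ0 t ht)]
  have hCB : C ≤ B := setIntegral_mono_on hC hB measurableSet_Ioo fun t ht => by
    nlinarith [hf1 t ht, mul_nonneg (hg0 t ht) (hρ0 t ht)]
  -- lower bound via Chebyshev double-integral trick
  have hinner : ∀ y ∈ S, (∫ x in S, (f x - f y) * (g x - g y) * (ρ x * ρ y))
      = ρ y * (C - g y * A - f y * B + f y * g y * I) := by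
    intro y hy
    have hrw : (fun x => (f x - f y) * (g x - g y) * (ρ x * ρ y))
        = fun x => (f x * g x * ρ x - g y * (f x * ρ x) - f y * (g x * ρ x)
            + (f y * g y) * ρ x) * ρ y := by
      funext x; ring
    have i0 : Integrable (fun x => g y * (f x * ρ x)) (volume.restrict S) :=
      hA.const_mul _
    have i0' : Integrable (fun x => f y * (g x * ρ x)) (volume.restrict S) :=
      hB.const_mul _
    have i1 : Integrable (fun x => f x * g x * ρ x - g y * (f x * ρ x))
        (volume.restrict S) := hC.sub i0
    have i2 : Integrable
        (fun x => f x * g x * ρ x - g y * (f x * ρ x) - f y * (g x * ρ x))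
        (volume.restrict S) := i1.sub i0'
    have i3 : Integrable (fun x => f y * g y * ρ x) (volume.restrict S) :=
      hI.const_mul _
    rw [hrw, integral_mul_const, integral_add i2 i3, integral_sub i1 i0',
      integral_sub hC i0, integral_const_mul, integral_const_mul, integral_const_mul]
    rw [← hAdef, ← hBdef, ← hCdef, ← hIdef]
    ring
  have houter : (∫ y in S, ρ y * (C - g y * A - f y * B + f y * g y * I))
      = 2 * (I * C - A * B) := by
    have hrw : (fun y => ρ y * (C - g y * A - f y * B + f y * g y * I))
        = fun y => (C * ρ y - A * (g y * ρ y) - B * (f y * ρ y)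
            + I * (f y * g y * ρ y)) := by
      funext y; ring
    have j0 : Integrable (fun y => C * ρ y) (volume.restrict S) := hI.const_mul _
    have j0' : Integrable (fun y => A * (g y * ρ y)) (volume.restrict S) :=
      hB.const_mul _
    have j0'' : Integrable (fun y => B * (f y * ρ y)) (volume.restrict S) :=
      hA.const_mul _
    have j1 : Integrable (fun y => C * ρ y - A * (g y * ρ y)) (volume.restrict S) :=
      j0.sub j0'
    have j2 : Integrable (fun y => C * ρ y - A * (g y * ρ y) - B * (f y * ρ y))
        (volume.restrict S) := j1.sub j0''
    have j3 : Integrable (fun y => I * (f y * g y * ρ y)) (volume.restrict S) :=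
      hC.const_mul _
    rw [hrw, integral_add j2 j3, integral_sub j1 j0'', integral_sub j0 j0',
      integral_const_mul, integral_const_mul, integral_const_mul, integral_const_mul]
    rw [← hAdef, ← hBdef, ← hCdef, ← hIdef]
    ring
  have hlow : 0 ≤ I * C - A * B := by
    have h0 : 0 ≤ ∫ y in S, ρ y * (C - g y * A - f y * B + f y * g y * I) := by
      refine setIntegral_nonneg measurableSet_Ioo fun y hy => ?_
      rw [← hinner y hy]
      refine setIntegral_nonneg measurableSet_Ioo fun x hx => ?_
      have hmono : 0 ≤ (f x - f y) * (g x - g y) := by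
        rcases le_total x y with h | h
        · have h1 : f x ≤ f y := Real.rpow_le_rpow hx.1.le h hα.le
          have h2 : g x ≤ g y := Real.rpow_le_rpow hx.1.le h hβ.le
          nlinarith
        · have h1 : f y ≤ f x := Real.rpow_le_rpow hy.1.le h hα.le
          have h2 : g y ≤ g x := Real.rpow_le_rpow hy.1.le h hβ.le
          exact mul_nonneg (by linarith) (by linarith)
      exact mul_nonneg hmono (mul_nonneg (hρ0 x hx) (hρ0 y hy))
    rw [houter] at h0
    linarith
  refine ⟨hlow, ?_⟩
  rcases le_total A B with h | h
  · nlinarith [sq_nonneg (I - 2 * A)]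
  · nlinarith [sq_nonneg (I - 2 * B)]
end

section
/- Let a_1,…,a_p and b_1,…,b_p be positive reals such that, after sorting both lists increasingly, Σ_{i=1}^{k} a_i ≤ Σ_{i=1}^{k} b_i for every k = 1,…,p (weak supermajorization b ≺^W a). Then the Müntz polynomial v(t) = Σ_{k=1}^{p} (t^{a_k} − t^{b_k}) is nonnegative on [0,1]. -/
open Finset

lemma abel_nonneg (p : ℕ) (g d : ℕ → ℝ)
    (hg0 : ∀ k < p, g k ≤ 0)
    (hgm : ∀ i j, i ≤ j → j < p → g i ≤ g j)
    (hd : ∀ k ≤ p, ∑ i ∈ Finset.range k, d i ≤ 0) :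
    0 ≤ ∑ k ∈ Finset.range p, g k * d k := by
  rcases Nat.eq_zero_or_pos p with h | h
  · simp [h]
  have hbp := Finset.sum_range_by_parts g d p
  simp only [smul_eq_mul] at hbp
  rw [hbp]
  have h1 : 0 ≤ g (p - 1) * ∑ i ∈ Finset.range p, d i :=
    by nlinarith [hg0 (p - 1) (by omega : p - 1 < p), hd p le_rfl]
  have h2 : ∑ i ∈ Finset.range (p - 1), (g (i + 1) - g i) * ∑ j ∈ Finset.range (i + 1), d j ≤ 0 := by
    apply Finset.sum_nonpos
    intro i hi
    simp only [Finset.mem_range] at hi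
    exact mul_nonpos_of_nonneg_of_nonpos
      (by linarith [hgm i (i + 1) (by omega) (by omega)]) (hd _ (by omega))
  linarith

theorem stmt_17 (p : ℕ) (a b : ℕ → ℝ)
    (ha : ∀ k < p, 0 < a k) (hb : ∀ k < p, 0 < b k)
    (hamono : ∀ i j, i ≤ j → j < p → a i ≤ a j)
    (hbmono : ∀ i j, i ≤ j → j < p → b i ≤ b j)
    (hmaj : ∀ k ≤ p, ∑ i ∈ Finset.range k, a i ≤ ∑ i ∈ Finset.range k, b i) :
    ∀ t ∈ Set.Icc (0 : ℝ) 1, 0 ≤ ∑ k ∈ Finset.range p, (t ^ a k - t ^ b k) := by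
  rintro t ⟨ht0, ht1⟩
  rcases eq_or_lt_of_le ht0 with h0 | hpos
  · apply Finset.sum_nonneg
    intro k hk
    simp only [Finset.mem_range] at hk
    rw [← h0, Real.zero_rpow (ha k hk).ne', Real.zero_rpow (hb k hk).ne']
    simp
  have hlog : Real.log t ≤ 0 := Real.log_nonpos (le_of_lt hpos) ht1
  have key : ∀ k < p, (Real.log t * t ^ b k) * (a k - b k) ≤ t ^ a k - t ^ b k := by
    intro k hk
    rw [Real.rpow_def_of_pos hpos (a k), Real.rpow_def_of_pos hpos (b k)]
    have h := Real.add_one_le_exp (a k * Real.log t - b k * Real.log t)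
    have hexp : Real.exp (b k * Real.log t) * (a k * Real.log t - b k * Real.log t + 1)
        ≤ Real.exp (b k * Real.log t) * Real.exp (a k * Real.log t - b k * Real.log t) :=
      mul_le_mul_of_nonneg_left h (Real.exp_pos _).le
    rw [← Real.exp_add] at hexp
    ring_nf at hexp ⊢
    nlinarith [hexp]
  have hmain : 0 ≤ ∑ k ∈ Finset.range p, (Real.log t * t ^ b k) * (a k - b k) := by
    apply abel_nonneg
    · intro k hk
      exact mul_nonpos_of_nonpos_of_nonneg hlog (Real.rpow_pos_of_pos hpos _).le
    · intro i j hij hj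
      apply mul_le_mul_of_nonpos_left _ hlog
      exact Real.rpow_le_rpow_of_exponent_ge hpos ht1 (hbmono i j hij hj)
    · intro k hk
      rw [Finset.sum_sub_distrib]
      have := hmaj k (le_trans hk le_rfl)
      linarith
  calc (0 : ℝ) ≤ ∑ k ∈ Finset.range p, (Real.log t * t ^ b k) * (a k - b k) := hmain
    _ ≤ ∑ k ∈ Finset.range p, (t ^ a k - t ^ b k) := by
        apply Finset.sum_le_sum
        intro k hk
        exact key k (Finset.mem_range.mp hk)
end
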